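/- Let s > 0 and ℓ ∈ ℕ with 2ℓ > s. There exists a constant C = C(ℓ,s,n) such that for every f ∈ Λ_s and every t > 0, ‖f - B_{ℓ,t} f‖_∞ ≤ C t^s ‖f‖_{Λ_s}, where B_{ℓ,t} is the 2ℓ-th order ball average operator. -/

import Mathlib

open MeasureTheory ENNReal

noncomputable section

/-- One symmetric difference step: `(Δ_h g)(x) = g(x + h/2) - g(x - h/2)`. -/
def sdOp {n : ℕ} (h : EuclideanSpace ℝ (Fin n)) (g : EuclideanSpace ℝ (Fin n) → ℝ) :
    EuclideanSpace ℝ (Fin n) → ℝ :=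
  fun x => g (x + (2 : ℝ)⁻¹ • h) - g (x - (2 : ℝ)⁻¹ • h)

/-- `k`-th order symmetric difference `Δ_h^k f`. -/
def sdiff {n : ℕ} (h : EuclideanSpace ℝ (Fin n)) (k : ℕ)
    (f : EuclideanSpace ℝ (Fin n) → ℝ) : EuclideanSpace ℝ (Fin n) → ℝ :=
  (sdOp h)^[k] f

/-- The ball average `B_t f(x) = ⨍_{B(0,1)} f(x + tz) dz`. -/
def ballAvg {n : ℕ} (t : ℝ) (f : EuclideanSpace ℝ (Fin n) → ℝ)
    (x : EuclideanSpace ℝ (Fin n)) : ℝ :=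
  ⨍ z in Metric.ball (0 : EuclideanSpace ℝ (Fin n)) 1, f (x + t • z)

/-- The `2ℓ`-th order ball average operator
`B_{ℓ,t} f = (-2/C(2ℓ,ℓ)) Σ_{j=1}^ℓ (-1)^j C(2ℓ,ℓ-j) B_{jt} f`. -/
def ballAvgOp {n : ℕ} (ℓ : ℕ) (t : ℝ) (f : EuclideanSpace ℝ (Fin n) → ℝ)
    (x : EuclideanSpace ℝ (Fin n)) : ℝ :=
  (-2 / (Nat.choose (2 * ℓ) ℓ : ℝ)) *
    ∑ j ∈ Finset.Icc 1 ℓ,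
      (-1 : ℝ) ^ j * (Nat.choose (2 * ℓ) (ℓ - j) : ℝ) * ballAvg ((j : ℝ) * t) f x

end

noncomputable section
/-- Membership in the inhomogeneous Lipschitz space `Λ_s`. -/
def MemLambda {n : ℕ} (s : ℝ) (f : EuclideanSpace ℝ (Fin n) → ℝ) : Prop :=
  Continuous f ∧ (∃ M : ℝ, ∀ x, |f x| ≤ M) ∧
    ∃ L : ℝ, ∀ (x h : EuclideanSpace ℝ (Fin n)), ‖h‖ ≤ 1 →
      |sdiff h (⌊s⌋₊ + 1) f x| ≤ L * ‖h‖ ^ s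

/-- The `Λ_s` norm, as an extended nonnegative real. -/
def LambdaNorm {n : ℕ} (s : ℝ) (f : EuclideanSpace ℝ (Fin n) → ℝ) : ℝ≥0∞ :=
  (⨆ x : EuclideanSpace ℝ (Fin n), ENNReal.ofReal |f x|) +
    ⨆ (h : {h : EuclideanSpace ℝ (Fin n) // 0 < ‖h‖ ∧ ‖h‖ ≤ 1})
      (x : EuclideanSpace ℝ (Fin n)),
        ENNReal.ofReal (‖h.1‖ ^ (-s) * |sdiff h.1 (⌊s⌋₊ + 1) f x|)
end

section Aux

open Finset

lemma sdiff_eq_fwdDiff {n : ℕ} (h : EuclideanSpace ℝ (Fin n)) (f : EuclideanSpace ℝ (Fin n) → ℝ)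
    (k : ℕ) (x : EuclideanSpace ℝ (Fin n)) :
    _root_.sdiff h k f x = (fwdDiff h)^[k] f (x - ((k : ℝ) * 2⁻¹) • h) := by
  induction k generalizing x with
  | zero => simp [_root_.sdiff]
  | succ k ih =>
    have h1 : _root_.sdiff h (k+1) f x = sdOp h (_root_.sdiff h k f) x := by
      simp only [_root_.sdiff, Function.iterate_succ_apply']
    rw [h1]
    rw [Function.iterate_succ_apply']
    show _root_.sdiff h k f (x + (2:ℝ)⁻¹ • h) - _root_.sdiff h k f (x - (2:ℝ)⁻¹ • h) = _
    rw [ih, ih, fwdDiff]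
    have e1 : x + (2:ℝ)⁻¹ • h - ((k : ℝ) * 2⁻¹) • h
        = (x - (((k:ℕ)+1 : ℝ) * 2⁻¹) • h) + h := by module
    have e2 : x - (2:ℝ)⁻¹ • h - ((k : ℝ) * 2⁻¹) • h
        = x - (((k:ℕ)+1 : ℝ) * 2⁻¹) • h := by module
    rw [e1, e2]
    norm_num

lemma sdiff_eq_sum {n : ℕ} (h : EuclideanSpace ℝ (Fin n)) (f : EuclideanSpace ℝ (Fin n) → ℝ)
    (m : ℕ) (x : EuclideanSpace ℝ (Fin n)) :
    _root_.sdiff h m f x = ∑ k ∈ Finset.range (m+1),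
      ((-1:ℝ)^(m-k) * (m.choose k)) * f (x + (((k:ℝ) - (m:ℝ) * 2⁻¹)) • h) := by
  rw [sdiff_eq_fwdDiff, fwdDiff_iter_eq_sum_shift]
  refine Finset.sum_congr rfl fun k hk => ?_
  rw [← Nat.cast_smul_eq_nsmul ℝ k h, zsmul_eq_mul]
  push_cast
  congr 2
  module

lemma sdiff_zero_eq {n : ℕ} (k : ℕ) (f : EuclideanSpace ℝ (Fin n) → ℝ)
    (x : EuclideanSpace ℝ (Fin n)) : _root_.sdiff (0 : EuclideanSpace ℝ (Fin n)) (k+1) f x = 0 := by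
  rw [_root_.sdiff, Function.iterate_succ_apply']
  show sdOp 0 _ x = 0
  simp [sdOp]

lemma abs_iterate_sdOp_le {n : ℕ} (h : EuclideanSpace ℝ (Fin n))
    {g : EuclideanSpace ℝ (Fin n) → ℝ} {M : ℝ} (hg : ∀ y, |g y| ≤ M) (m : ℕ) :
    ∀ y, |(sdOp h)^[m] g y| ≤ 2^m * M := by
  induction m with
  | zero => simpa using hg
  | succ m ih =>
    intro y
    rw [Function.iterate_succ_apply']
    calc |sdOp h ((sdOp h)^[m] g) y|
        ≤ |(sdOp h)^[m] g (y + (2:ℝ)⁻¹ • h)| + |(sdOp h)^[m] g (y - (2:ℝ)⁻¹ • h)| := abs_sub _ _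
      _ ≤ 2^m * M + 2^m * M := add_le_add (ih _) (ih _)
      _ = 2^(m+1) * M := by ring

lemma vol_ball_pos (n : ℕ) :
    0 < (volume (Metric.ball (0 : EuclideanSpace ℝ (Fin n)) 1)).toReal :=
  ENNReal.toReal_pos (Metric.measure_ball_pos volume 0 one_pos).ne'
    measure_ball_lt_top.ne

lemma integrableOn_comp {n : ℕ} {f : EuclideanSpace ℝ (Fin n) → ℝ} (hf : Continuous f)
    (c : ℝ) (x : EuclideanSpace ℝ (Fin n)) :
    IntegrableOn (fun z => f (x + c • z)) (Metric.ball (0 : EuclideanSpace ℝ (Fin n)) 1) volume := by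
  have hcont : Continuous fun z : EuclideanSpace ℝ (Fin n) => f (x + c • z) :=
    hf.comp (continuous_const.add (continuous_const_smul c))
  exact (hcont.continuousOn.integrableOn_compact (isCompact_closedBall 0 1)).mono_set
    Metric.ball_subset_closedBall

lemma ballAvg_neg {n : ℕ} (c : ℝ) (f : EuclideanSpace ℝ (Fin n) → ℝ)
    (x : EuclideanSpace ℝ (Fin n)) : ballAvg (-c) f x = ballAvg c f x := by
  unfold ballAvg
  rw [setAverage_eq, setAverage_eq]
  congr 1
  have h1 : MeasurePreserving (Neg.neg : EuclideanSpace ℝ (Fin n) → EuclideanSpace ℝ (Fin n))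
      volume volume := Measure.measurePreserving_neg _
  have h2 : MeasurableEmbedding (Neg.neg : EuclideanSpace ℝ (Fin n) → EuclideanSpace ℝ (Fin n)) :=
    (Homeomorph.neg (EuclideanSpace ℝ (Fin n))).measurableEmbedding
  have key := h1.setIntegral_preimage_emb h2 (fun z => f (x + c • z))
    (Metric.ball (0 : EuclideanSpace ℝ (Fin n)) 1)
  have hset : (Neg.neg : EuclideanSpace ℝ (Fin n) → EuclideanSpace ℝ (Fin n)) ⁻¹'
      Metric.ball 0 1 = Metric.ball 0 1 := by
    ext z; simp [Metric.mem_ball, dist_zero_right]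
  rw [hset] at key
  rw [← key]
  refine setIntegral_congr_fun measurableSet_ball fun z _ => ?_
  simp [smul_neg, neg_smul]

lemma ballAvg_zero {n : ℕ} (f : EuclideanSpace ℝ (Fin n) → ℝ)
    (x : EuclideanSpace ℝ (Fin n)) : ballAvg 0 f x = f x := by
  unfold ballAvg
  simp only [zero_smul, add_zero]
  exact setAverage_const (Metric.measure_ball_pos volume 0 one_pos).ne'
    measure_ball_lt_top.ne _

lemma abs_setAverage_le {n : ℕ} {g : EuclideanSpace ℝ (Fin n) → ℝ} {M : ℝ}
    (hM : ∀ z ∈ Metric.ball (0 : EuclideanSpace ℝ (Fin n)) 1, |g z| ≤ M) :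
    |⨍ z in Metric.ball (0 : EuclideanSpace ℝ (Fin n)) 1, g z| ≤ M := by
  rw [setAverage_eq]
  have h1 : ‖∫ z in Metric.ball (0 : EuclideanSpace ℝ (Fin n)) 1, g z‖
      ≤ M * (volume (Metric.ball (0 : EuclideanSpace ℝ (Fin n)) 1)).toReal :=
    norm_setIntegral_le_of_norm_le_const measure_ball_lt_top hM
  have hv := vol_ball_pos n
  rw [Real.norm_eq_abs] at h1
  rw [smul_eq_mul, measureReal_def, abs_mul, abs_of_nonneg (inv_nonneg.mpr hv.le)]
  calc (volume (Metric.ball (0:EuclideanSpace ℝ (Fin n)) 1)).toReal⁻¹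
        * |∫ z in Metric.ball (0:EuclideanSpace ℝ (Fin n)) 1, g z|
      ≤ (volume (Metric.ball (0:EuclideanSpace ℝ (Fin n)) 1)).toReal⁻¹
        * (M * (volume (Metric.ball (0:EuclideanSpace ℝ (Fin n)) 1)).toReal) :=
        mul_le_mul_of_nonneg_left h1 (inv_nonneg.mpr hv.le)
    _ = M := by field_simp

lemma neg_one_pow_two_mul_add (a b : ℕ) : ((-1:ℝ))^(2*a+b) = (-1)^b := by
  rw [pow_add, pow_mul, neg_one_sq, one_pow, one_mul]

lemma sum_sym (ℓ : ℕ) (b : ℤ → ℝ) (hb : ∀ j : ℤ, b (-j) = b j) :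
    ∑ k ∈ Finset.range (2*ℓ+1),
        (-1:ℝ)^(2*ℓ-k) * ((2*ℓ).choose k : ℝ) * b ((k:ℤ) - (ℓ:ℤ))
    = (-1:ℝ)^ℓ * (((2*ℓ).choose ℓ : ℝ) * b 0
        + 2 * ∑ j ∈ Finset.Icc 1 ℓ, (-1:ℝ)^j * ((2*ℓ).choose (ℓ-j) : ℝ) * b (j:ℤ)) := by
  set F : ℕ → ℝ := fun k => (-1:ℝ)^(2*ℓ-k) * ((2*ℓ).choose k : ℝ) * b ((k:ℤ) - (ℓ:ℤ)) with hF
  set G : ℕ → ℝ := fun j => (-1:ℝ)^j * ((2*ℓ).choose (ℓ-j) : ℝ) * b (j:ℤ) with hG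
  have h0 : ∑ k ∈ range (2*ℓ+1), F k
      = ∑ k ∈ Ico 0 ℓ, F k + ∑ k ∈ Ico ℓ (2*ℓ+1), F k := by
    rw [range_eq_Ico]
    exact (Finset.sum_Ico_consecutive _ (Nat.zero_le ℓ) (by omega)).symm
  have hA : ∑ k ∈ Ico 0 ℓ, F k = ∑ i ∈ range ℓ, F (ℓ-1-i) := by
    rw [← range_eq_Ico]
    exact (Finset.sum_range_reflect F ℓ).symm
  have hB : ∑ k ∈ Ico ℓ (2*ℓ+1), F k = F ℓ + ∑ i ∈ range ℓ, F (ℓ+1+i) := by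
    rw [Finset.sum_eq_sum_Ico_succ_bot (by omega : ℓ < 2*ℓ+1)]
    congr 1
    rw [Finset.sum_Ico_eq_sum_range, show 2*ℓ+1-(ℓ+1) = ℓ by omega]
  have hsplit : ∑ k ∈ range (2*ℓ+1), F k
      = ∑ i ∈ range ℓ, F (ℓ-1-i) + (F ℓ + ∑ i ∈ range ℓ, F (ℓ+1+i)) := by
    rw [h0, hA, hB]
  have hrhs : ∑ j ∈ Finset.Icc 1 ℓ, G j = ∑ i ∈ range ℓ, G (1+i) := by
    rw [← Finset.Ico_add_one_right_eq_Icc, Finset.sum_Ico_eq_sum_range]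
    simp
  have hFl : F ℓ = (-1:ℝ)^ℓ * (((2*ℓ).choose ℓ : ℝ) * b 0) := by
    simp only [hF]
    have h1 : 2*ℓ-ℓ = ℓ := by omega
    have h2 : (ℓ:ℤ) - (ℓ:ℤ) = 0 := by ring
    rw [h1, h2, mul_assoc]
  have hterm : ∀ i ∈ range ℓ, F (ℓ-1-i) + F (ℓ+1+i) = (-1:ℝ)^ℓ * (2 * G (1+i)) := by
    intro i hi
    have hiℓ : i < ℓ := Finset.mem_range.mp hi
    obtain ⟨d, rfl⟩ : ∃ d, ℓ = i + 1 + d := ⟨ℓ - (i+1), by omega⟩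
    simp only [hF, hG]
    have e1 : i + 1 + d - 1 - i = d := by omega
    have e2 : 2*(i+1+d) - d = 2*(i+1) + d := by omega
    have e3 : 2*(i+1+d) - (i+1+d+1+i) = d := by omega
    have e4 : (i+1+d) - (1+i) = d := by omega
    have e5 : ((d:ℕ):ℤ) - ((i+1+d:ℕ):ℤ) = -((1+i:ℕ):ℤ) := by push_cast; ring
    have e6 : ((i+1+d+1+i:ℕ):ℤ) - ((i+1+d:ℕ):ℤ) = ((1+i:ℕ):ℤ) := by push_cast; ring
    have e7 : (2*(i+1+d)).choose (i+1+d+1+i) = (2*(i+1+d)).choose d := by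
      rw [← Nat.choose_symm (by omega : i+1+d+1+i ≤ 2*(i+1+d)), e3]
    rw [e1, e2, e3, e5, e6, e7, e4, hb]
    rw [neg_one_pow_two_mul_add]
    have e8 : (-1:ℝ)^(i+1+d) * (-1:ℝ)^(1+i) = (-1:ℝ)^d := by
      rw [← pow_add, show (i+1+d)+(1+i) = 2*(i+1)+d by ring, neg_one_pow_two_mul_add]
    calc (-1:ℝ)^d * ((2*(i+1+d)).choose d : ℝ) * b ((1+i:ℕ):ℤ)
          + (-1:ℝ)^d * ((2*(i+1+d)).choose d : ℝ) * b ((1+i:ℕ):ℤ)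
        = 2 * ((-1:ℝ)^(i+1+d) * (-1:ℝ)^(1+i))
            * ((2*(i+1+d)).choose d : ℝ) * b ((1+i:ℕ):ℤ) := by rw [e8]; ring
      _ = (-1:ℝ)^(i+1+d) * (2 * ((-1:ℝ)^(1+i) * ((2*(i+1+d)).choose d : ℝ)
            * b ((1+i:ℕ):ℤ))) := by ring
  have hsum2 : ∑ i ∈ range ℓ, F (ℓ-1-i) + ∑ i ∈ range ℓ, F (ℓ+1+i)
      = (-1:ℝ)^ℓ * (2 * ∑ i ∈ range ℓ, G (1+i)) := by
    rw [← Finset.sum_add_distrib]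
    simp only [Finset.mul_sum]
    exact Finset.sum_congr rfl hterm
  rw [hsplit, hrhs, hFl, mul_add]
  rw [← hsum2]
  ring

end Aux

set_option maxHeartbeats 1000000 in
/-- for `2ℓ > s` there is `C = C(ℓ,s,n)` with
`‖f - B_{ℓ,t} f‖_∞ ≤ C t^s ‖f‖_{Λ_s}` for every `f ∈ Λ_s` and `t > 0`. -/
theorem stmt18 (n : ℕ) (hn : 1 ≤ n) (s : ℝ) (hs : 0 < s)
    (ℓ : ℕ) (hℓ : 1 ≤ ℓ) (h2ℓ : s < 2 * ℓ) :
    ∃ C : ℝ, 0 < C ∧ ∀ f : EuclideanSpace ℝ (Fin n) → ℝ, MemLambda s f →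
      ∀ t : ℝ, 0 < t → ∀ x : EuclideanSpace ℝ (Fin n),
        ENNReal.ofReal |f x - ballAvgOp ℓ t f x| ≤
          ENNReal.ofReal (C * t ^ s) * LambdaNorm s f := by
  classical
  have hk₀le : ⌊s⌋₊ + 1 ≤ 2*ℓ := by
    have h1 : ⌊s⌋₊ < 2*ℓ := by
      rw [Nat.floor_lt hs.le]
      push_cast
      exact h2ℓ
    omega
  set D : ℝ := 2 * ∑ j ∈ Finset.Icc 1 ℓ, ((2*ℓ).choose (ℓ-j) : ℝ) with hD
  have hD0 : 0 ≤ D := by positivity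
  refine ⟨2^(2*ℓ) + (1 + D), by positivity, ?_⟩
  intro f hf t ht x
  obtain ⟨hc, ⟨M, hM⟩, L, hL⟩ := hf
  set A := ⨆ y : EuclideanSpace ℝ (Fin n), ENNReal.ofReal |f y| with hAdef
  set T := ⨆ (h : {h : EuclideanSpace ℝ (Fin n) // 0 < ‖h‖ ∧ ‖h‖ ≤ 1})
      (y : EuclideanSpace ℝ (Fin n)),
        ENNReal.ofReal (‖h.1‖ ^ (-s) * |sdiff h.1 (⌊s⌋₊ + 1) f y|) with hTdef
  have hLN : LambdaNorm s f = A + T := rfl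
  have hAtop : A ≠ ⊤ :=
    ne_top_of_le_ne_top ofReal_ne_top (iSup_le fun y => ENNReal.ofReal_le_ofReal (hM y))
  have hTtop : T ≠ ⊤ := by
    refine ne_top_of_le_ne_top (ofReal_ne_top (r := L)) (iSup_le fun h => iSup_le fun y => ?_)
    refine ENNReal.ofReal_le_ofReal ?_
    have h1 : |sdiff h.1 (⌊s⌋₊ + 1) f y| ≤ L * ‖h.1‖^s := hL y h.1 h.2.2
    have hpos := h.2.1
    calc ‖h.1‖^(-s) * |sdiff h.1 (⌊s⌋₊ + 1) f y|
        ≤ ‖h.1‖^(-s) * (L * ‖h.1‖^s) :=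
          mul_le_mul_of_nonneg_left h1 (Real.rpow_nonneg (norm_nonneg _) _)
      _ = L * (‖h.1‖^(-s) * ‖h.1‖^s) := by ring
      _ = L := by rw [← Real.rpow_add hpos, neg_add_cancel, Real.rpow_zero, mul_one]
  set Ar := A.toReal with hArdef
  set Lr := T.toReal with hLrdef
  have hAr0 : 0 ≤ Ar := ENNReal.toReal_nonneg
  have hLr0 : 0 ≤ Lr := ENNReal.toReal_nonneg
  have hAr : ∀ y, |f y| ≤ Ar := by
    intro y
    have h1 : ENNReal.ofReal |f y| ≤ A := le_iSup (fun y => ENNReal.ofReal |f y|) y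
    have h2 := ENNReal.toReal_mono hAtop h1
    rwa [ENNReal.toReal_ofReal (abs_nonneg _)] at h2
  have hLrb : ∀ (h : EuclideanSpace ℝ (Fin n)), ‖h‖ ≤ 1 →
      ∀ y, |sdiff h (⌊s⌋₊ + 1) f y| ≤ Lr * ‖h‖^s := by
    intro h hh y
    rcases eq_or_lt_of_le (norm_nonneg h) with h0 | h0
    · have hh0 : h = 0 := by rw [← norm_eq_zero]; exact h0.symm
      subst hh0
      rw [sdiff_zero_eq, norm_zero, Real.zero_rpow hs.ne', mul_zero, abs_zero]
    · have hmem : ENNReal.ofReal (‖h‖^(-s) * |sdiff h (⌊s⌋₊ + 1) f y|) ≤ T := by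
        calc ENNReal.ofReal (‖h‖^(-s) * |sdiff h (⌊s⌋₊ + 1) f y|)
            ≤ ⨆ y, ENNReal.ofReal (‖h‖^(-s) * |sdiff h (⌊s⌋₊ + 1) f y|) :=
              le_iSup (fun y => ENNReal.ofReal (‖h‖^(-s) * |sdiff h (⌊s⌋₊ + 1) f y|)) y
          _ ≤ T := le_iSup (fun (hh : {h : EuclideanSpace ℝ (Fin n) // 0 < ‖h‖ ∧ ‖h‖ ≤ 1}) =>
              ⨆ y, ENNReal.ofReal (‖hh.1‖^(-s) * |sdiff hh.1 (⌊s⌋₊ + 1) f y|)) ⟨h, h0, hh⟩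
      have h2 := ENNReal.toReal_mono hTtop hmem
      rw [ENNReal.toReal_ofReal
        (mul_nonneg (Real.rpow_nonneg (norm_nonneg _) _) (abs_nonneg _))] at h2
      have h3 : (0:ℝ) < ‖h‖^s := Real.rpow_pos_of_pos h0 s
      calc |sdiff h (⌊s⌋₊ + 1) f y|
          = ‖h‖^s * (‖h‖^(-s) * |sdiff h (⌊s⌋₊ + 1) f y|) := by
            rw [← mul_assoc, ← Real.rpow_add h0, add_neg_cancel, Real.rpow_zero, one_mul]
        _ ≤ ‖h‖^s * Lr := mul_le_mul_of_nonneg_left h2 h3.le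
        _ = Lr * ‖h‖^s := mul_comm _ _
  have hsd : ∀ (h : EuclideanSpace ℝ (Fin n)), ‖h‖ ≤ 1 →
      ∀ y, |sdiff h (2*ℓ) f y| ≤ 2^(2*ℓ - (⌊s⌋₊+1)) * (Lr * ‖h‖^s) := by
    intro h hh y
    have hdecomp : sdiff h (2*ℓ) f y
        = (sdOp h)^[2*ℓ - (⌊s⌋₊+1)] (sdiff h (⌊s⌋₊+1) f) y := by
      show sdiff h (2*ℓ) f y = (sdOp h)^[2*ℓ - (⌊s⌋₊+1)] ((sdOp h)^[⌊s⌋₊+1] f) y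
      rw [← Function.iterate_add_apply, Nat.sub_add_cancel hk₀le]
      rfl
    rw [hdecomp]
    exact abs_iterate_sdOp_le h (hLrb h hh) (2*ℓ - (⌊s⌋₊+1)) y
  -- the key identity
  have hC0pos : (0:ℝ) < ((2*ℓ).choose ℓ : ℝ) := by
    exact_mod_cast Nat.choose_pos (by omega : ℓ ≤ 2*ℓ)
  have hC0ge1 : (1:ℝ) ≤ ((2*ℓ).choose ℓ : ℝ) := by
    exact_mod_cast Nat.one_le_iff_ne_zero.mpr (Nat.choose_pos (by omega : ℓ ≤ 2*ℓ)).ne'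
  have hGexp : ∀ z : EuclideanSpace ℝ (Fin n), sdiff (t•z) (2*ℓ) f x
      = ∑ k ∈ Finset.range (2*ℓ+1),
          ((-1:ℝ)^(2*ℓ-k) * ((2*ℓ).choose k : ℝ)) * f (x + (((k:ℝ) - (ℓ:ℝ))*t) • z) := by
    intro z
    rw [sdiff_eq_sum]
    refine Finset.sum_congr rfl fun k _ => ?_
    congr 1
    rw [smul_smul]
    congr 1
    push_cast
    ring
  have havg : (⨍ z in Metric.ball (0 : EuclideanSpace ℝ (Fin n)) 1, sdiff (t•z) (2*ℓ) f x)
      = ∑ k ∈ Finset.range (2*ℓ+1), ((-1:ℝ)^(2*ℓ-k) * ((2*ℓ).choose k : ℝ))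
          * ballAvg (((k:ℝ)-(ℓ:ℝ))*t) f x := by
    simp only [hGexp]
    have hint : (∫ z in Metric.ball (0:EuclideanSpace ℝ (Fin n)) 1,
        ∑ k ∈ Finset.range (2*ℓ+1), ((-1:ℝ)^(2*ℓ-k) * ((2*ℓ).choose k : ℝ))
          * f (x + (((k:ℝ)-(ℓ:ℝ))*t) • z))
        = ∑ k ∈ Finset.range (2*ℓ+1), ∫ z in Metric.ball (0:EuclideanSpace ℝ (Fin n)) 1,
            ((-1:ℝ)^(2*ℓ-k) * ((2*ℓ).choose k : ℝ)) * f (x + (((k:ℝ)-(ℓ:ℝ))*t) • z) :=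
      integral_finset_sum _
        (fun k _ => (integrableOn_comp hc (((k:ℝ)-(ℓ:ℝ))*t) x).const_mul _)
    rw [setAverage_eq, hint, smul_eq_mul, Finset.mul_sum]
    refine Finset.sum_congr rfl fun k _ => ?_
    rw [MeasureTheory.integral_const_mul]
    simp only [ballAvg, setAverage_eq, smul_eq_mul]
    ring
  set b : ℤ → ℝ := fun j => ballAvg ((j:ℝ)*t) f x with hbdef
  have hbsym : ∀ j : ℤ, b (-j) = b j := by
    intro j
    simp only [hbdef]
    rw [Int.cast_neg, neg_mul, ballAvg_neg]
  have hbk : ∀ k : ℕ, ballAvg (((k:ℝ)-(ℓ:ℝ))*t) f x = b ((k:ℤ) - (ℓ:ℤ)) := by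
    intro k
    simp only [hbdef]
    have : (((k:ℤ) - (ℓ:ℤ) : ℤ):ℝ) = (k:ℝ)-(ℓ:ℝ) := by push_cast; ring
    rw [this]
  have hb0 : b 0 = f x := by
    simp only [hbdef, Int.cast_zero, zero_mul]
    exact ballAvg_zero f x
  have hbj : ∀ j : ℕ, b (j:ℤ) = ballAvg ((j:ℝ)*t) f x := by
    intro j
    simp only [hbdef, Int.cast_natCast]
  have hkey0 : (⨍ z in Metric.ball (0 : EuclideanSpace ℝ (Fin n)) 1, sdiff (t•z) (2*ℓ) f x)
      = (-1:ℝ)^ℓ * (((2*ℓ).choose ℓ : ℝ) * f x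
          + 2 * ∑ j ∈ Finset.Icc 1 ℓ, (-1:ℝ)^j * ((2*ℓ).choose (ℓ-j) : ℝ)
              * ballAvg ((j:ℝ)*t) f x) := by
    rw [havg]
    simp only [hbk]
    rw [show (∑ k ∈ Finset.range (2*ℓ+1), ((-1:ℝ)^(2*ℓ-k) * ((2*ℓ).choose k : ℝ))
        * b ((k:ℤ) - (ℓ:ℤ)))
      = ∑ k ∈ Finset.range (2*ℓ+1), (-1:ℝ)^(2*ℓ-k) * ((2*ℓ).choose k : ℝ)
        * b ((k:ℤ) - (ℓ:ℤ)) from rfl]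
    rw [sum_sym ℓ b hbsym, hb0]
    simp only [hbj]
  have hOp : ballAvgOp ℓ t f x = (-2 / ((2*ℓ).choose ℓ : ℝ)) *
      ∑ j ∈ Finset.Icc 1 ℓ, (-1:ℝ)^j * ((2*ℓ).choose (ℓ-j) : ℝ) * ballAvg ((j:ℝ)*t) f x := rfl
  have hsq : (-1:ℝ)^ℓ * (-1:ℝ)^ℓ = 1 := by
    rw [← pow_add, ← two_mul, pow_mul, neg_one_sq, one_pow]
  have h9 : ∀ Y : ℝ, ((-1:ℝ)^ℓ / ((2*ℓ).choose ℓ : ℝ)) * ((-1:ℝ)^ℓ * Y)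
      = Y / ((2*ℓ).choose ℓ : ℝ) := by
    intro Y
    rw [div_mul_eq_mul_div, ← mul_assoc, hsq, one_mul]
  have key : f x - ballAvgOp ℓ t f x = ((-1:ℝ)^ℓ / ((2*ℓ).choose ℓ : ℝ))
      * ⨍ z in Metric.ball (0 : EuclideanSpace ℝ (Fin n)) 1, sdiff (t•z) (2*ℓ) f x := by
    rw [hkey0, hOp, h9]
    field_simp
    simp only [mul_comm t]
    ring
  have habs : |f x - ballAvgOp ℓ t f x| = (1/((2*ℓ).choose ℓ : ℝ))
      * |⨍ z in Metric.ball (0 : EuclideanSpace ℝ (Fin n)) 1, sdiff (t•z) (2*ℓ) f x| := by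
    rw [key, abs_mul, abs_div, abs_pow, abs_neg, abs_one, one_pow, abs_of_pos hC0pos]
  rcases le_or_gt t 1 with ht1 | ht1
  · -- small t : use the smoothness bound
    have hbound : ∀ z ∈ Metric.ball (0 : EuclideanSpace ℝ (Fin n)) 1,
        |sdiff (t•z) (2*ℓ) f x| ≤ 2^(2*ℓ-(⌊s⌋₊+1)) * (Lr * t^s) := by
      intro z hz
      have hz1 : ‖z‖ < 1 := by simpa [Metric.mem_ball, dist_zero_right] using hz
      have hnorm : ‖t • z‖ ≤ t := by
        rw [norm_smul, Real.norm_eq_abs, abs_of_pos ht]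
        nlinarith [norm_nonneg z]
      refine (hsd (t•z) (by linarith) x).trans ?_
      have h5 : ‖t•z‖^s ≤ t^s := Real.rpow_le_rpow (norm_nonneg _) hnorm hs.le
      have h6 : Lr * ‖t•z‖^s ≤ Lr * t^s := mul_le_mul_of_nonneg_left h5 hLr0
      exact mul_le_mul_of_nonneg_left h6 (by positivity)
    have h2 : |⨍ z in Metric.ball (0 : EuclideanSpace ℝ (Fin n)) 1, sdiff (t•z) (2*ℓ) f x|
        ≤ 2^(2*ℓ-(⌊s⌋₊+1)) * (Lr * t^s) := abs_setAverage_le hbound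
    have hts : (0:ℝ) < t^s := Real.rpow_pos_of_pos ht s
    have hfinal : |f x - ballAvgOp ℓ t f x| ≤ ((2^(2*ℓ) + (1 + D)) * t^s) * Lr := by
      rw [habs]
      have hp : (2:ℝ)^(2*ℓ-(⌊s⌋₊+1)) ≤ 2^(2*ℓ) :=
        pow_le_pow_right₀ (by norm_num) (by omega)
      have hq : 1/((2*ℓ).choose ℓ : ℝ) ≤ 1 := by
        rw [div_le_one hC0pos]; exact hC0ge1
      have habs0 : (0:ℝ) ≤ |⨍ z in Metric.ball (0 : EuclideanSpace ℝ (Fin n)) 1,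
          sdiff (t•z) (2*ℓ) f x| := abs_nonneg _
      nlinarith [mul_nonneg hLr0 hts.le, pow_pos (by norm_num : (0:ℝ) < 2) (2*ℓ)]
    calc ENNReal.ofReal |f x - ballAvgOp ℓ t f x|
        ≤ ENNReal.ofReal (((2^(2*ℓ) + (1 + D)) * t^s) * Lr) := ENNReal.ofReal_le_ofReal hfinal
      _ = ENNReal.ofReal ((2^(2*ℓ) + (1 + D)) * t^s) * ENNReal.ofReal Lr :=
          ENNReal.ofReal_mul (by positivity)
      _ ≤ ENNReal.ofReal ((2^(2*ℓ) + (1 + D)) * t^s) * LambdaNorm s f := by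
          refine mul_le_mul_right ?_ _
          rw [hLN, hLrdef, ENNReal.ofReal_toReal hTtop]
          exact le_add_self
  · -- large t : crude bound
    have hts1 : (1:ℝ) ≤ t^s := by
      calc (1:ℝ) = 1^s := (Real.one_rpow s).symm
        _ ≤ t^s := Real.rpow_le_rpow zero_le_one ht1.le hs.le
    have havgb : ∀ c : ℝ, |ballAvg c f x| ≤ Ar := fun c =>
      abs_setAverage_le (fun z _ => hAr _)
    have hOpb : |ballAvgOp ℓ t f x| ≤ D * Ar := by
      rw [hOp, abs_mul, abs_div, abs_neg]
      have h1 : |∑ j ∈ Finset.Icc 1 ℓ, (-1:ℝ)^j * ((2*ℓ).choose (ℓ-j) : ℝ)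
          * ballAvg ((j:ℝ)*t) f x| ≤ ∑ j ∈ Finset.Icc 1 ℓ, ((2*ℓ).choose (ℓ-j) : ℝ) * Ar := by
        refine (Finset.abs_sum_le_sum_abs _ _).trans (Finset.sum_le_sum fun j _ => ?_)
        rw [abs_mul, abs_mul, abs_pow, abs_neg, abs_one, one_pow, one_mul, Nat.abs_cast]
        exact mul_le_mul_of_nonneg_left (havgb _) (Nat.cast_nonneg _)
      have h2 : |(2:ℝ)| / |((2*ℓ).choose ℓ : ℝ)| ≤ 2 := by
        rw [abs_of_pos hC0pos, abs_of_pos (by norm_num : (0:ℝ) < 2)]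
        exact div_le_self (by norm_num) hC0ge1
      have h3 : (0:ℝ) ≤ ∑ j ∈ Finset.Icc 1 ℓ, ((2*ℓ).choose (ℓ-j) : ℝ) * Ar :=
        Finset.sum_nonneg fun j _ => mul_nonneg (Nat.cast_nonneg _) hAr0
      calc |(2:ℝ)| / |((2*ℓ).choose ℓ : ℝ)| * |∑ j ∈ Finset.Icc 1 ℓ, (-1:ℝ)^j
            * ((2*ℓ).choose (ℓ-j) : ℝ) * ballAvg ((j:ℝ)*t) f x|
          ≤ 2 * (∑ j ∈ Finset.Icc 1 ℓ, ((2*ℓ).choose (ℓ-j) : ℝ) * Ar) :=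
            mul_le_mul h2 h1 (abs_nonneg _) (by norm_num)
        _ = D * Ar := by rw [hD, ← Finset.sum_mul]; ring
    have hfinal : |f x - ballAvgOp ℓ t f x| ≤ ((2^(2*ℓ) + (1 + D)) * t^s) * Ar := by
      have h4 : |f x - ballAvgOp ℓ t f x| ≤ |f x| + |ballAvgOp ℓ t f x| := abs_sub _ _
      have h5 := hAr x
      have h6 : (0:ℝ) ≤ 2^(2*ℓ)*(t^s*Ar) := by positivity
      have h7 : (0:ℝ) ≤ t^s := by positivity
      calc |f x - ballAvgOp ℓ t f x| ≤ |f x| + |ballAvgOp ℓ t f x| := h4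
        _ ≤ (1+D)*Ar := by nlinarith [h5, hOpb, hD0, hAr0]
        _ ≤ (1+D)*(t^s*Ar) := by
            nlinarith [mul_nonneg (mul_nonneg (by linarith : (0:ℝ) ≤ 1 + D) hAr0)
              (by linarith : (0:ℝ) ≤ t^s - 1)]
        _ ≤ ((2^(2*ℓ) + (1 + D)) * t^s) * Ar := by nlinarith [h6]
    calc ENNReal.ofReal |f x - ballAvgOp ℓ t f x|
        ≤ ENNReal.ofReal (((2^(2*ℓ) + (1 + D)) * t^s) * Ar) := ENNReal.ofReal_le_ofReal hfinal
      _ = ENNReal.ofReal ((2^(2*ℓ) + (1 + D)) * t^s) * ENNReal.ofReal Ar :=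
          ENNReal.ofReal_mul (by positivity)
      _ ≤ ENNReal.ofReal ((2^(2*ℓ) + (1 + D)) * t^s) * LambdaNorm s f := by
          refine mul_le_mul_right ?_ _
          rw [hLN, hArdef, ENNReal.ofReal_toReal hAtop]
          exact le_self_add
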